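/- Let n ≥ 1. For k = 1,…,n let p_k : ℝ × ℝⁿ → (0,∞) be three-times continuously differentiable (conditional marginal densities p_k(y_k | x)), for i = 1,…,n let p̂_i : ℝ × ℝⁿ → (0,∞) be three-times continuously differentiable, and let h : ℝⁿ → ℝⁿ be three-times continuously differentiable with Jacobian matrix H(ŷ) invertible at every ŷ, such that for all ŷ, x ∈ ℝⁿ: ∏_{i=1}^n p̂_i(ŷ_i, x) = (∏_{k=1}^n p_k(h(ŷ)_k, x)) · |det H(ŷ)|. Then for all i ≠ j, all l ∈ {1,…,n}, and all ŷ, x ∈ ℝⁿ: ∑_{k=1}^n [ (∂³ log p_k / ∂y_k² ∂x_l)(h(ŷ)_k, x) · H_{ki}(ŷ) · H_{kj}(ŷ) + (∂² log p_k / ∂y_k ∂x_l)(h(ŷ)_k, x) · ∂H_{ki}/∂ŷ_j (ŷ) ] = 0. -/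

import Mathlib

/-- Partial derivative of `f : ℝⁿ → ℝ` with respect to the `i`-th coordinate at `x`. -/
noncomputable def pd {k : ℕ} (i : Fin k) (f : (Fin k → ℝ) → ℝ) (x : Fin k → ℝ) : ℝ :=
  deriv (fun t => f (Function.update x i t)) (x i)

/-- Jacobian matrix of `h : ℝⁿ → ℝⁿ` at `yh`, with `(k, i)` entry `∂ h_k / ∂ y_i`. -/
noncomputable def jac {n : ℕ} (h : (Fin n → ℝ) → (Fin n → ℝ)) (yh : Fin n → ℝ) :
    Matrix (Fin n) (Fin n) ℝ :=
  Matrix.of fun k i => pd i (fun z => h z k) yh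

/-- `vvec p k y x` has `l`-th entry `∂² log p_k(y_k, x) / ∂y_k ∂x_l`. -/
noncomputable def vvec {n : ℕ} (p : Fin n → ℝ × (Fin n → ℝ) → ℝ) (k : Fin n)
    (y x : Fin n → ℝ) : Fin n → ℝ := fun l =>
  deriv (fun s => deriv (fun t => Real.log (p k (s, Function.update x l t))) (x l)) (y k)

/-- `vrvec p k y x` has `l`-th entry `∂³ log p_k(y_k, x) / ∂y_k² ∂x_l`. -/
noncomputable def vrvec {n : ℕ} (p : Fin n → ℝ × (Fin n → ℝ) → ℝ) (k : Fin n)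
    (y x : Fin n → ℝ) : Fin n → ℝ := fun l =>
  deriv (deriv (fun s => deriv (fun t => Real.log (p k (s, Function.update x l t))) (x l))) (y k)

section helpers

variable {n : ℕ}

lemma hasDerivAt_comp_update {f : (Fin n → ℝ) → ℝ} {x : Fin n → ℝ} {l : Fin n}
    (hf : DifferentiableAt ℝ f x) :
    HasDerivAt (fun t => f (Function.update x l t)) (fderiv ℝ f x (Pi.single l 1)) (x l) := by
  have h0 : HasDerivAt (fun t : ℝ => Function.update x l t) (Pi.single l 1) (x l) := by
    simpa using hasDerivAt_update x l (x l)
  have hf' : HasFDerivAt f (fderiv ℝ f x) (Function.update x l (x l)) := by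
    rw [Function.update_eq_self]; exact hf.hasFDerivAt
  have := hf'.comp_hasDerivAt (x l) h0
  simpa [Function.comp_def] using this

lemma pd_eq_fderiv {f : (Fin n → ℝ) → ℝ} {x : Fin n → ℝ} {i : Fin n}
    (hf : DifferentiableAt ℝ f x) :
    pd i f x = fderiv ℝ f x (Pi.single i 1) :=
  (hasDerivAt_comp_update hf).deriv

lemma hasDerivAt_comp_update_snd {L : ℝ × (Fin n → ℝ) → ℝ} {s : ℝ} {x : Fin n → ℝ} {l : Fin n}
    (hL : DifferentiableAt ℝ L (s, x)) :
    HasDerivAt (fun t => L (s, Function.update x l t))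
      (fderiv ℝ L (s, x) (0, Pi.single l 1)) (x l) := by
  have h0 : HasDerivAt (fun t : ℝ => ((s, Function.update x l t) : ℝ × (Fin n → ℝ)))
      ((0 : ℝ), (Pi.single l 1 : Fin n → ℝ)) (x l) :=
    (hasDerivAt_const (x l) s).prodMk (by simpa using hasDerivAt_update x l (x l))
  have hf' : HasFDerivAt L (fderiv ℝ L (s, x)) ((s, Function.update x l (x l))) := by
    rw [Function.update_eq_self]; exact hL.hasFDerivAt
  have := hf'.comp_hasDerivAt (x l) h0
  simpa [Function.comp_def] using this

lemma contDiff_deriv {m nn : WithTop ℕ∞} (f : ℝ → ℝ) (hf : ContDiff ℝ nn f) (hmn : m + 1 ≤ nn) :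
    ContDiff ℝ m (deriv f) := by
  have hd : deriv f = fun s => fderiv ℝ f s 1 := rfl
  rw [hd]
  exact (hf.fderiv_right hmn).clm_apply contDiff_const

lemma logP_contDiff {P : ℝ × (Fin n → ℝ) → ℝ} (hP : ContDiff ℝ 3 P)
    (hpos : ∀ s x, 0 < P (s, x)) : ContDiff ℝ 3 (fun z => Real.log (P z)) :=
  hP.log fun z => by have := (hpos z.1 z.2).ne'; simpa using this

noncomputable def qf {n : ℕ} (P : ℝ × (Fin n → ℝ) → ℝ) (x : Fin n → ℝ) (l : Fin n) : ℝ → ℝ :=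
  fun s => fderiv ℝ (fun z => Real.log (P z)) (s, x) (0, Pi.single l 1)

lemma qf_contDiff {P : ℝ × (Fin n → ℝ) → ℝ} (hP : ContDiff ℝ 3 P)
    (hpos : ∀ s x, 0 < P (s, x)) (x : Fin n → ℝ) (l : Fin n) :
    ContDiff ℝ 2 (qf P x l) := by
  unfold qf
  exact (((logP_contDiff hP hpos).fderiv_right (by norm_num)).comp
    (contDiff_id.prodMk contDiff_const)).clm_apply contDiff_const

lemma qf_hasDerivAt {P : ℝ × (Fin n → ℝ) → ℝ} (hP : ContDiff ℝ 3 P)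
    (hpos : ∀ s x, 0 < P (s, x)) (x : Fin n → ℝ) (l : Fin n) (s : ℝ) :
    HasDerivAt (fun t => Real.log (P (s, Function.update x l t))) (qf P x l s) (x l) :=
  hasDerivAt_comp_update_snd
    (((logP_contDiff hP hpos).differentiable (by norm_num)) (s, x))

lemma qf_eq {P : ℝ × (Fin n → ℝ) → ℝ} (hP : ContDiff ℝ 3 P)
    (hpos : ∀ s x, 0 < P (s, x)) (x : Fin n → ℝ) (l : Fin n) (s : ℝ) :
    deriv (fun t => Real.log (P (s, Function.update x l t))) (x l) = qf P x l s :=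
  (qf_hasDerivAt hP hpos x l s).deriv

end helpers

/-- Equation (eq:lind-ap): when the estimated conditional density factorizes and is related to
the factorized true conditional density by the change-of-variables formula through `h`, the
linear combination of third- and second-order mixed log-density derivatives with coefficients
`Hₖᵢ Hₖⱼ` and `∂Hₖᵢ/∂ŷⱼ` vanishes identically for `i ≠ j`. -/
theorem stmt7 {n : ℕ} (hn : 1 ≤ n)
    (p : Fin n → ℝ × (Fin n → ℝ) → ℝ)
    (hppos : ∀ (k : Fin n) (s : ℝ) (x : Fin n → ℝ), 0 < p k (s, x))
    (hpsmooth : ∀ k, ContDiff ℝ 3 (p k))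
    (phat : Fin n → ℝ × (Fin n → ℝ) → ℝ)
    (hphatpos : ∀ (i : Fin n) (s : ℝ) (x : Fin n → ℝ), 0 < phat i (s, x))
    (hphatsmooth : ∀ i, ContDiff ℝ 3 (phat i))
    (h : (Fin n → ℝ) → (Fin n → ℝ)) (hsmooth : ContDiff ℝ 3 h)
    (hJ : ∀ yh : Fin n → ℝ, IsUnit (jac h yh).det)
    (hchg : ∀ yh x : Fin n → ℝ,
      (∏ i, phat i (yh i, x)) = (∏ k, p k (h yh k, x)) * |(jac h yh).det|) :
    ∀ (i j : Fin n), i ≠ j → ∀ (l : Fin n) (yh x : Fin n → ℝ),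
      ∑ k, (vrvec p k (h yh) x l * jac h yh k i * jac h yh k j
          + vvec p k (h yh) x l * pd j (fun z => jac h z k i) yh) = 0 := by
  classical
  intro i j hij l yh x
  -- basic smoothness facts
  have hhk : ∀ k : Fin n, ContDiff ℝ 3 (fun z => h z k) := fun k => contDiff_pi.mp hsmooth k
  have hqc : ∀ k : Fin n, ContDiff ℝ 2 (qf (p k) x l) := fun k =>
    qf_contDiff (hpsmooth k) (hppos k) x l
  have hqhc : ∀ m : Fin n, ContDiff ℝ 2 (qf (phat m) x l) := fun m =>
    qf_contDiff (hphatsmooth m) (hphatpos m) x l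
  have hdqc : ∀ k : Fin n, ContDiff ℝ 1 (deriv (qf (p k) x l)) := fun k =>
    contDiff_deriv _ (hqc k) (by norm_num)
  have hdet : ∀ z : Fin n → ℝ, (jac h z).det ≠ 0 := fun z => (hJ z).ne_zero
  -- Jacobian column as fderiv application
  set Jf : Fin n → (Fin n → ℝ) → ℝ :=
    fun k w => fderiv ℝ (fun z => h z k) w (Pi.single i 1) with hJf
  have hJfc : ∀ k, ContDiff ℝ 2 (Jf k) := fun k =>
    ((hhk k).fderiv_right (by norm_num)).clm_apply contDiff_const
  have hjac_eq : ∀ (k : Fin n) (w : Fin n → ℝ), jac h w k i = Jf k w := fun k w =>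
    pd_eq_fderiv (((hhk k).differentiable (by norm_num)) w)
  -- Step 1: key identity from the change of variables formula
  have key : ∀ z : Fin n → ℝ,
      ∑ k, qf (p k) x l (h z k) = ∑ m, qf (phat m) x l (z m) := by
    intro z
    have hfun : ∀ u : Fin n → ℝ,
        ∑ m, Real.log (phat m (z m, u))
          = (∑ k, Real.log (p k (h z k, u))) + Real.log |(jac h z).det| := by
      intro u
      have h2 : Real.log (∏ m, phat m (z m, u))
          = Real.log ((∏ k, p k (h z k, u)) * |(jac h z).det|) := by rw [hchg z u]
      rw [Real.log_prod (fun m _ => (hphatpos m (z m) u).ne'),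
          Real.log_mul (Finset.prod_ne_zero_iff.mpr fun k _ => (hppos k (h z k) u).ne')
            (abs_ne_zero.mpr (hdet z)),
          Real.log_prod (fun k _ => (hppos k (h z k) u).ne')] at h2
      exact h2
    have hL : HasDerivAt (fun t => ∑ m, Real.log (phat m (z m, Function.update x l t)))
        (∑ m, qf (phat m) x l (z m)) (x l) :=
      HasDerivAt.fun_sum fun m _ => qf_hasDerivAt (hphatsmooth m) (hphatpos m) x l (z m)
    have hR : HasDerivAt
        (fun t => (∑ k, Real.log (p k (h z k, Function.update x l t)))
          + Real.log |(jac h z).det|)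
        (∑ k, qf (p k) x l (h z k)) (x l) :=
      (HasDerivAt.fun_sum fun k _ => qf_hasDerivAt (hpsmooth k) (hppos k) x l (h z k)).add_const _
    have heqf : (fun t => ∑ m, Real.log (phat m (z m, Function.update x l t)))
        = fun t => (∑ k, Real.log (p k (h z k, Function.update x l t)))
          + Real.log |(jac h z).det| := funext fun t => hfun _
    rw [heqf] at hL
    exact hR.unique hL
  -- Step 2: G w := ∂_i Φ(w) equals deriv (qf (phat i)) (w i)
  set G : (Fin n → ℝ) → ℝ :=
    fun w => ∑ k, deriv (qf (p k) x l) (h w k) * Jf k w with hG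
  have G_eq : ∀ w : Fin n → ℝ, G w = deriv (qf (phat i) x l) (w i) := by
    intro w
    have hΦL : HasDerivAt (fun t => ∑ k, qf (p k) x l (h (Function.update w i t) k))
        (G w) (w i) := by
      refine HasDerivAt.fun_sum fun k _ => ?_
      have hinner : HasDerivAt (fun t => h (Function.update w i t) k) (Jf k w) (w i) :=
        hasDerivAt_comp_update (((hhk k).differentiable (by norm_num)) w)
      have houter : HasDerivAt (qf (p k) x l) (deriv (qf (p k) x l) (h w k))
          (h (Function.update w i (w i)) k) := by
        rw [Function.update_eq_self]
        exact (((hqc k).differentiable (by norm_num)) _).hasDerivAt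
      have := houter.comp (w i) hinner
      simpa [Function.comp_def, Function.update_eq_self] using this
    have hsplit : ∀ t : ℝ, ∑ m, qf (phat m) x l (Function.update w i t m)
        = qf (phat i) x l t + ∑ m ∈ Finset.univ.erase i, qf (phat m) x l (w m) := by
      intro t
      rw [← Finset.add_sum_erase _ (fun m => qf (phat m) x l (Function.update w i t m))
        (Finset.mem_univ i), Function.update_self]
      congr 1
      exact Finset.sum_congr rfl fun m hm => by
        rw [Function.update_of_ne (Finset.ne_of_mem_erase hm)]
    have hfun2 : (fun t => ∑ k, qf (p k) x l (h (Function.update w i t) k))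
        = fun t => qf (phat i) x l t
          + ∑ m ∈ Finset.univ.erase i, qf (phat m) x l (w m) :=
      funext fun t => by rw [key (Function.update w i t)]; exact hsplit t
    rw [hfun2] at hΦL
    have hΦR : HasDerivAt
        (fun t => qf (phat i) x l t
          + ∑ m ∈ Finset.univ.erase i, qf (phat m) x l (w m))
        (deriv (qf (phat i) x l) (w i)) (w i) :=
      ((((hqhc i).differentiable (by norm_num)) (w i)).hasDerivAt).add_const _
    exact hΦL.unique hΦR
  -- Step 3: ∂_j G = 0 since G w depends only on w i and i ≠ j
  have hGconst : (fun t => G (Function.update yh j t))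
      = fun _ => deriv (qf (phat i) x l) (yh i) := by
    funext t
    rw [G_eq, Function.update_of_ne hij]
  have hGd : HasDerivAt (fun t => G (Function.update yh j t)) 0 (yh j) := by
    rw [hGconst]; exact hasDerivAt_const _ _
  -- Step 4: ∂_j G computed by the product/chain rule equals the target sum
  have hCd : HasDerivAt (fun t => G (Function.update yh j t))
      (∑ k, (deriv (deriv (qf (p k) x l)) (h yh k)
          * fderiv ℝ (fun z => h z k) yh (Pi.single j 1) * Jf k yh
        + deriv (qf (p k) x l) (h yh k) * fderiv ℝ (Jf k) yh (Pi.single j 1))) (yh j) := by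
    refine HasDerivAt.fun_sum fun k _ => ?_
    have hinnerj : HasDerivAt (fun t => h (Function.update yh j t) k)
        (fderiv ℝ (fun z => h z k) yh (Pi.single j 1)) (yh j) :=
      hasDerivAt_comp_update (((hhk k).differentiable (by norm_num)) yh)
    have houter : HasDerivAt (deriv (qf (p k) x l))
        (deriv (deriv (qf (p k) x l)) (h yh k)) (h (Function.update yh j (yh j)) k) := by
      rw [Function.update_eq_self]
      exact ((((hdqc k).differentiable (by norm_num))) _).hasDerivAt
    have ha : HasDerivAt (fun t => deriv (qf (p k) x l) (h (Function.update yh j t) k))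
        (deriv (deriv (qf (p k) x l)) (h yh k)
          * fderiv ℝ (fun z => h z k) yh (Pi.single j 1)) (yh j) := by
      have := houter.comp (yh j) hinnerj
      simpa [Function.comp_def] using this
    have hb : HasDerivAt (fun t => Jf k (Function.update yh j t))
        (fderiv ℝ (Jf k) yh (Pi.single j 1)) (yh j) :=
      hasDerivAt_comp_update (((hJfc k).differentiable (by norm_num)) yh)
    have := ha.fun_mul hb
    simpa [Function.update_eq_self] using this
  have hzero := hCd.unique hGd
  -- Step 5: rewrite the goal into the derivative computed in Step 4
  rw [← hzero]
  refine Finset.sum_congr rfl fun k _ => ?_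
  have hFq : (fun s => deriv (fun t => Real.log (p k (s, Function.update x l t))) (x l))
      = qf (p k) x l := funext fun s => qf_eq (hpsmooth k) (hppos k) x l s
  have h1 : vrvec p k (h yh) x l = deriv (deriv (qf (p k) x l)) (h yh k) := by
    simp only [vrvec, hFq]
  have h2 : vvec p k (h yh) x l = deriv (qf (p k) x l) (h yh k) := by
    simp only [vvec, hFq]
  have h3 : jac h yh k i = Jf k yh := hjac_eq k yh
  have h4 : jac h yh k j = fderiv ℝ (fun z => h z k) yh (Pi.single j 1) :=
    pd_eq_fderiv (((hhk k).differentiable (by norm_num)) yh)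
  have h5 : pd j (fun z => jac h z k i) yh = fderiv ℝ (Jf k) yh (Pi.single j 1) := by
    have hfun : (fun z => jac h z k i) = Jf k := funext fun z => hjac_eq k z
    rw [hfun]
    exact pd_eq_fderiv (((hJfc k).differentiable (by norm_num)) yh)
  rw [h1, h2, h3, h4, h5]
  ring
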